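/- Let n and k be integers with 0 ≤ k < n, and set N = ⌊((k+2)/(k+1))·n⌋ − (k+1). Suppose a bipartite multigraph G with parts A and B is the union of N matchings M₁, …, M_N, each of size n. Then G contains a rainbow matching of size n − k, i.e. there exist n − k pairwise distinct indices i₁, …, i_{n−k} and edges e₁ ∈ M_{i₁}, …, e_{n−k} ∈ M_{i_{n−k}} that form a matching. -/

import Mathlib

/-- A set of edges of a bipartite multigraph with parts `A` and `B` is a matching
if any two distinct edges differ in both coordinates. -/
def IsMatching {A B : Type*} (S : Finset (A × B)) : Prop :=
  ∀ e ∈ S, ∀ f ∈ S, e ≠ f → e.1 ≠ f.1 ∧ e.2 ≠ f.2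

/-- Given matchings `M 0, …, M (N-1)`, a rainbow matching of size `s` consists of `s`
edges coming from pairwise distinct matchings, any two of which differ in both
coordinates. -/
def HasRainbowMatching {A B : Type*} {N : ℕ} (M : Fin N → Finset (A × B)) (s : ℕ) : Prop :=
  ∃ (c : Fin s → Fin N) (e : Fin s → A × B),
    Function.Injective c ∧ (∀ i, e i ∈ M (c i)) ∧
      ∀ i j, i ≠ j → (e i).1 ≠ (e j).1 ∧ (e i).2 ≠ (e j).2

namespace RB

open scoped Classical

variable {A B : Type*} {N : ℕ}

/-- Internal representation of a rainbow matching: a finite set of (color, edge) pairs. -/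
def Rainbow (M : Fin N → Finset (A × B)) (S : Finset (Fin N × A × B)) : Prop :=
  (∀ p ∈ S, p.2 ∈ M p.1) ∧
    ∀ p ∈ S, ∀ q ∈ S, p ≠ q → p.1 ≠ q.1 ∧ p.2.1 ≠ q.2.1 ∧ p.2.2 ≠ q.2.2

/-- Chain element: (position of R, label, edge). -/
abbrev Elt (A B : Type*) (N : ℕ) := (Fin N × A × B) × Fin N × A × B

variable (M : Fin N → Finset (A × B)) (R : Finset (Fin N × A × B))

/-- Chains, in end-first order. -/
def Ch (W : Finset (Fin N)) : List (Elt A B N) → Prop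
  | [] => True
  | x :: L =>
      x.1 ∈ R ∧ x.2.1 ∈ W ∧ (∀ ρ ∈ R, x.2.1 ≠ ρ.1) ∧ x.2.2 ∈ M x.2.1 ∧
      x.2.2.2 = x.1.2.2 ∧ x.1 ∉ L.map Prod.fst ∧ (x.2.1 ∉ L.map fun y => y.2.1) ∧
      (match L with
       | [] => ∀ ρ ∈ R, x.2.2.1 ≠ ρ.2.1
       | y :: _ => x.2.2.1 = y.1.2.1) ∧
      Ch W L

/-- The configuration obtained from R by performing the swaps of a chain. -/
noncomputable def Qof (L : List (Elt A B N)) : Finset (Fin N × A × B) :=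
  (R.filter fun ρ => ρ ∉ L.map Prod.fst) ∪ (L.map fun x => x.2).toFinset

/-- Reachable positions using labels from W. -/
noncomputable def Reach (W : Finset (Fin N)) : Finset (Fin N × A × B) :=
  R.filter fun ρ => ∃ (F : Fin N) (g : A × B) (L : List (Elt A B N)),
    Ch M R W ((⟨ρ, F, g⟩ : Elt A B N) :: L)

lemma ch_tail {W : Finset (Fin N)} {x : Elt A B N} {L : List (Elt A B N)}
    (h : Ch M R W (x :: L)) : Ch M R W L := h.2.2.2.2.2.2.2.2

lemma ch_mono {W W' : Finset (Fin N)} (hWW : W ⊆ W') :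
    ∀ {L : List (Elt A B N)}, Ch M R W L → Ch M R W' L := by
  intro L
  induction L with
  | nil => intro h; trivial
  | cons x L ih =>
      intro h
      exact ⟨h.1, hWW h.2.1, h.2.2.1, h.2.2.2.1, h.2.2.2.2.1, h.2.2.2.2.2.1,
        h.2.2.2.2.2.2.1, h.2.2.2.2.2.2.2.1, ih (ch_tail M R h)⟩

lemma ch_elem {W : Finset (Fin N)} :
    ∀ {L : List (Elt A B N)}, Ch M R W L → ∀ x ∈ L,
      x.1 ∈ R ∧ x.2.1 ∈ W ∧ (∀ ρ ∈ R, x.2.1 ≠ ρ.1) ∧ x.2.2 ∈ M x.2.1 ∧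
        x.2.2.2 = x.1.2.2 := by
  intro L
  induction L with
  | nil => intro _ x hx; exact absurd hx List.not_mem_nil
  | cons y L ih =>
      intro h x hx
      rcases List.mem_cons.1 hx with rfl | hx
      · exact ⟨h.1, h.2.1, h.2.2.1, h.2.2.2.1, h.2.2.2.2.1⟩
      · exact ih (ch_tail M R h) x hx

lemma mem_Qof {L : List (Elt A B N)} {p : Fin N × A × B} :
    p ∈ Qof R L ↔ (p ∈ R ∧ p ∉ L.map Prod.fst) ∨ p ∈ L.map fun x => x.2 := by
  simp [Qof]

lemma rainbow_injA {S : Finset (Fin N × A × B)} (h : Rainbow M S) :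
    ∀ p ∈ S, ∀ q ∈ S, p.2.1 = q.2.1 → p = q := by
  intro p hp q hq he
  by_contra hne
  exact (h.2 p hp q hq hne).2.1 he

lemma rainbow_injB {S : Finset (Fin N × A × B)} (h : Rainbow M S) :
    ∀ p ∈ S, ∀ q ∈ S, p.2.2 = q.2.2 → p = q := by
  intro p hp q hq he
  by_contra hne
  exact (h.2 p hp q hq hne).2.2 he

lemma Qof_nil : Qof R ([] : List (Elt A B N)) = R := by
  simp [Qof]

lemma Qof_cons {W : Finset (Fin N)} {x : Elt A B N} {L : List (Elt A B N)}
    (hch : Ch M R W (x :: L)) :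
    Qof R (x :: L) = insert x.2 ((Qof R L).erase x.1) := by
  have hx1notpair : ∀ y ∈ L, x.1 ≠ y.2 := by
    intro y hy hEq
    have hy' := ch_elem M R (ch_tail M R hch) y hy
    exact hy'.2.2.1 x.1 hch.1 (by rw [← hEq])
  ext p
  rw [Finset.mem_insert, Finset.mem_erase, mem_Qof, mem_Qof]
  simp only [List.map_cons, List.mem_cons]
  constructor
  · rintro (⟨hpR, hnot⟩ | (hpx | hpair))
    · push_neg at hnot
      exact Or.inr ⟨hnot.1, Or.inl ⟨hpR, hnot.2⟩⟩
    · exact Or.inl hpx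
    · have hne : p ≠ x.1 := by
        rcases List.mem_map.1 hpair with ⟨y, hy, rfl⟩
        exact fun h => hx1notpair y hy h.symm
      exact Or.inr ⟨hne, Or.inr hpair⟩
  · rintro (rfl | ⟨hne, (⟨hpR, hnp⟩ | hpair)⟩)
    · exact Or.inr (Or.inl rfl)
    · refine Or.inl ⟨hpR, ?_⟩
      push_neg
      exact ⟨hne, hnp⟩
    · exact Or.inr (Or.inr hpair)

lemma insert_swap (hR : Rainbow M R) {Q₀ : Finset (Fin N × A × B)}
    (hQ : Rainbow M Q₀) (hcard : Q₀.card = R.card)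
    (hB : ∀ p ∈ Q₀, ∃ ρ ∈ R, p.2.2 = ρ.2.2)
    {x : Elt A B N} (hx1 : x.1 ∈ R) (hx1Q : x.1 ∈ Q₀)
    (hg : x.2.2 ∈ M x.2.1) (hgb : x.2.2.2 = x.1.2.2)
    (hcol : ∀ p ∈ Q₀, p.1 ≠ x.2.1)
    (hA : ∀ p ∈ Q₀, p.2.1 ≠ x.2.2.1) :
    Rainbow M (insert x.2 ((Q₀).erase x.1)) ∧
      (insert x.2 ((Q₀).erase x.1)).card = R.card ∧
      (∀ p ∈ insert x.2 ((Q₀).erase x.1), p.2.1 ≠ x.1.2.1) ∧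
      (∀ p ∈ insert x.2 ((Q₀).erase x.1), ∃ ρ ∈ R, p.2.2 = ρ.2.2) := by
  have hxnotin : x.2 ∉ Q₀.erase x.1 := by
    intro hmem
    exact hcol x.2 (Finset.mem_of_mem_erase hmem) rfl
  have hpairnew : ∀ q ∈ Q₀.erase x.1,
      x.2.1 ≠ q.1 ∧ x.2.2.1 ≠ q.2.1 ∧ x.2.2.2 ≠ q.2.2 := by
    intro q hq
    have hqQ := Finset.mem_of_mem_erase hq
    refine ⟨fun h => hcol q hqQ h.symm, fun h => hA q hqQ h.symm, fun h => ?_⟩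
    have : q = x.1 := rainbow_injB M hQ q hqQ x.1 hx1Q (by rw [← h, hgb])
    exact (Finset.ne_of_mem_erase hq) this
  refine ⟨⟨?_, ?_⟩, ?_, ?_, ?_⟩
  · intro p hp
    rcases Finset.mem_insert.1 hp with rfl | hp'
    · exact hg
    · exact hQ.1 p (Finset.mem_of_mem_erase hp')
  · intro p hp q hq hne
    rcases Finset.mem_insert.1 hp with rfl | hp' <;>
      rcases Finset.mem_insert.1 hq with rfl | hq'
    · exact absurd rfl hne
    · exact hpairnew q hq'
    · have := hpairnew p hp'
      exact ⟨(this.1 ·.symm), (this.2.1 ·.symm), (this.2.2 ·.symm)⟩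
    · exact hQ.2 p (Finset.mem_of_mem_erase hp') q (Finset.mem_of_mem_erase hq') hne
  · rw [Finset.card_insert_of_notMem hxnotin, Finset.card_erase_of_mem hx1Q, hcard]
    have : 0 < R.card := Finset.card_pos.2 ⟨x.1, hx1⟩
    omega
  · intro p hp
    rcases Finset.mem_insert.1 hp with rfl | hp'
    · exact fun h => hA x.1 hx1Q h.symm
    · intro h
      have : p = x.1 := rainbow_injA M hQ p (Finset.mem_of_mem_erase hp') x.1 hx1Q h
      exact (Finset.ne_of_mem_erase hp') this
  · intro p hp
    rcases Finset.mem_insert.1 hp with rfl | hp'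
    · exact ⟨x.1, hx1, hgb⟩
    · exact hB p (Finset.mem_of_mem_erase hp')

lemma master (hR : Rainbow M R) {W : Finset (Fin N)} :
    ∀ (L : List (Elt A B N)) (x : Elt A B N), Ch M R W (x :: L) →
      Rainbow M (Qof R (x :: L)) ∧ (Qof R (x :: L)).card = R.card ∧
      (∀ p ∈ Qof R (x :: L), p.2.1 ≠ x.1.2.1) ∧
      (∀ p ∈ Qof R (x :: L), ∃ ρ ∈ R, p.2.2 = ρ.2.2) := by
  intro L
  induction L with
  | nil =>
      intro x hch
      rw [Qof_cons M R hch, Qof_nil]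
      have hfresh : ∀ ρ ∈ R, x.2.2.1 ≠ ρ.2.1 := hch.2.2.2.2.2.2.2.1
      have h := insert_swap M R hR hR rfl (fun p hp => ⟨p, hp, rfl⟩) hch.1 hch.1
        hch.2.2.2.1 hch.2.2.2.2.1 (fun p hp h => hch.2.2.1 p hp h.symm)
        (fun p hp h => hfresh p hp h.symm)
      exact ⟨h.1, h.2.1, h.2.2.1, h.2.2.2⟩
  | cons y L ih =>
      intro x hch
      have htail : Ch M R W (y :: L) := ch_tail M R hch
      obtain ⟨ihRb, ihcard, ihfree, ihB⟩ := ih y htail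
      have hlink : x.2.2.1 = y.1.2.1 := hch.2.2.2.2.2.2.2.1
      have hx1Q : x.1 ∈ Qof R (y :: L) := by
        rw [mem_Qof]
        exact Or.inl ⟨hch.1, hch.2.2.2.2.2.1⟩
      have hcol : ∀ p ∈ Qof R (y :: L), p.1 ≠ x.2.1 := by
        intro p hp
        rcases (mem_Qof R).1 hp with ⟨hpR, _⟩ | hppair
        · exact fun h => hch.2.2.1 p hpR h.symm
        · rcases List.mem_map.1 hppair with ⟨z, hz, rfl⟩
          intro h
          exact hch.2.2.2.2.2.2.1 (List.mem_map.2 ⟨z, hz, h⟩)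
      have hA : ∀ p ∈ Qof R (y :: L), p.2.1 ≠ x.2.2.1 := by
        intro p hp
        rw [hlink]
        exact ihfree p hp
      rw [Qof_cons M R hch]
      have h := insert_swap M R hR ihRb ihcard ihB hch.1 hx1Q hch.2.2.2.1
        hch.2.2.2.2.1 hcol hA
      exact ⟨h.1, h.2.1, h.2.2.1, h.2.2.2⟩

lemma Qof_colors {L : List (Elt A B N)} {p : Fin N × A × B} (hp : p ∈ Qof R L) :
    p ∈ R ∨ ∃ y ∈ L, p = y.2 := by
  rcases (mem_Qof R).1 hp with ⟨h, _⟩ | h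
  · exact Or.inl h
  · rcases List.mem_map.1 h with ⟨y, hy, rfl⟩
    exact Or.inr ⟨y, hy, rfl⟩

/-- Basic win: a totally free edge from an unused matching extends R. -/
lemma win0 (hR : Rainbow M R) (hnb : ∀ S : Finset (Fin N × A × B), Rainbow M S → S.card ≤ R.card)
    {G : Fin N} {e : A × B} (hGu : ∀ ρ ∈ R, G ≠ ρ.1) (he : e ∈ M G)
    (hA : ∀ ρ ∈ R, e.1 ≠ ρ.2.1) (hB : ∀ ρ ∈ R, e.2 ≠ ρ.2.2) : False := by
  have hnotin : (⟨G, e⟩ : Fin N × A × B) ∉ R := fun h => hGu _ h rfl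
  have hrb : Rainbow M (insert (⟨G, e⟩ : Fin N × A × B) R) := by
    constructor
    · intro p hp
      rcases Finset.mem_insert.1 hp with rfl | hp'
      · exact he
      · exact hR.1 p hp'
    · intro p hp q hq hne
      rcases Finset.mem_insert.1 hp with rfl | hp' <;>
        rcases Finset.mem_insert.1 hq with rfl | hq'
      · exact absurd rfl hne
      · exact ⟨hGu q hq', hA q hq', hB q hq'⟩
      · exact ⟨fun h => hGu p hp' h.symm, fun h => hA p hp' h.symm, fun h => hB p hp' h.symm⟩
      · exact hR.2 p hp' q hq' hne
  have := hnb _ hrb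
  rw [Finset.card_insert_of_notMem hnotin] at this
  omega

/-- Chain win: a pin at the free end of a chain, from an unused matching outside W. -/
lemma win1 (hR : Rainbow M R) (hnb : ∀ S : Finset (Fin N × A × B), Rainbow M S → S.card ≤ R.card)
    {W : Finset (Fin N)} {x : Elt A B N} {L : List (Elt A B N)} (hch : Ch M R W (x :: L))
    {G : Fin N} {e : A × B} (hGu : ∀ ρ ∈ R, G ≠ ρ.1) (hGW : G ∉ W) (he : e ∈ M G)
    (hA : e.1 = x.1.2.1) (hB : ∀ ρ ∈ R, e.2 ≠ ρ.2.2) : False := by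
  obtain ⟨hQR, hQcard, hQfree, hQB⟩ := master M R hR L x hch
  have hGcol : ∀ p ∈ Qof R (x :: L), p.1 ≠ G := by
    intro p hp
    rcases Qof_colors R hp with h | ⟨y, hy, rfl⟩
    · exact fun hEq => hGu p h hEq.symm
    · have := (ch_elem M R hch y hy).2.1
      exact fun hEq => hGW (hEq ▸ this)
  have hnotin : (⟨G, e⟩ : Fin N × A × B) ∉ Qof R (x :: L) := fun h => hGcol _ h rfl
  have hrb : Rainbow M (insert (⟨G, e⟩ : Fin N × A × B) (Qof R (x :: L))) := by
    constructor
    · intro p hp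
      rcases Finset.mem_insert.1 hp with rfl | hp'
      · exact he
      · exact hQR.1 p hp'
    · intro p hp q hq hne
      have key : ∀ q' ∈ Qof R (x :: L),
          (G : Fin N) ≠ q'.1 ∧ e.1 ≠ q'.2.1 ∧ e.2 ≠ q'.2.2 := by
        intro q' hq'
        refine ⟨fun hEq => hGcol q' hq' hEq.symm, fun hEq => hQfree q' hq' (hEq ▸ hA ▸ rfl), ?_⟩
        intro hEq
        obtain ⟨ρ, hρ, hρ2⟩ := hQB q' hq'
        exact hB ρ hρ (hEq ▸ hρ2)
      rcases Finset.mem_insert.1 hp with rfl | hp' <;>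
        rcases Finset.mem_insert.1 hq with rfl | hq'
      · exact absurd rfl hne
      · exact key q hq'
      · have := key p hp'
        exact ⟨(this.1 ·.symm), (this.2.1 ·.symm), (this.2.2 ·.symm)⟩
      · exact hQR.2 p hp' q hq' hne
  have := hnb _ hrb
  rw [Finset.card_insert_of_notMem hnotin, hQcard] at this
  omega

lemma reach_subset {W : Finset (Fin N)} : Reach M R W ⊆ R :=
  Finset.filter_subset _ _

lemma reach_mono {W W' : Finset (Fin N)} (h : W ⊆ W') : Reach M R W ⊆ Reach M R W' := by
  intro ρ hρ
  rw [Reach, Finset.mem_filter] at hρ ⊢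
  obtain ⟨hρR, F, g, L, hch⟩ := hρ
  exact ⟨hρR, F, g, L, ch_mono M R h hch⟩

lemma mem_reach_of_chain {W : Finset (Fin N)} :
    ∀ {L : List (Elt A B N)}, Ch M R W L → ∀ x ∈ L, x.1 ∈ Reach M R W := by
  intro L
  induction L with
  | nil => intro _ x hx; exact absurd hx List.not_mem_nil
  | cons y L ih =>
      intro hch x hx
      rcases List.mem_cons.1 hx with rfl | hx'
      · rw [Reach, Finset.mem_filter]
        exact ⟨hch.1, x.2.1, x.2.2, L, hch⟩
      · exact ih (ch_tail M R hch) x hx'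

/-- The key counting step: adding one unused matching to the label pool. -/
lemma step (hR : Rainbow M R)
    (hnb : ∀ S : Finset (Fin N × A × B), Rainbow M S → S.card ≤ R.card)
    {G : Fin N} {W : Finset (Fin N)}
    (hmG : IsMatching (M G)) (hGu : ∀ ρ ∈ R, G ≠ ρ.1) (hGW : G ∉ W) :
    (M G).card + (Reach M R W).card ≤ R.card + (Reach M R (insert G W)).card := by
  set V := Reach M R W with hV
  set V' := Reach M R (insert G W) with hV'
  set S₁ := (M G).filter (fun e => ∃ ρ ∈ V', e.2 = ρ.2.2) with hS₁
  set S₂ := (M G).filter (fun e => ¬ ∃ ρ ∈ V', e.2 = ρ.2.2) with hS₂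
  have hsplit : S₁.card + S₂.card = (M G).card :=
    Finset.card_filter_add_card_filter_not _
  have h1 : S₁.card ≤ V'.card := by
    have himg : S₁.image (fun e => e.2) ⊆ V'.image (fun ρ => ρ.2.2) := by
      intro b hb
      obtain ⟨e, heS, rfl⟩ := Finset.mem_image.1 hb
      obtain ⟨heMG, ρ, hρ, heq⟩ := Finset.mem_filter.1 heS
      exact Finset.mem_image.2 ⟨ρ, hρ, heq.symm⟩
    have hcardimg : (S₁.image (fun e => e.2)).card = S₁.card := by
      apply Finset.card_image_of_injOn
      intro e he f hf hef
      by_contra hne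
      exact (hmG e (Finset.mem_filter.1 he).1 f (Finset.mem_filter.1 hf).1 hne).2 hef
    calc S₁.card = (S₁.image (fun e => e.2)).card := hcardimg.symm
      _ ≤ (V'.image fun ρ => ρ.2.2).card := Finset.card_le_card himg
      _ ≤ V'.card := Finset.card_image_le
  have h2 : ∀ e ∈ S₂, ∃ ρ ∈ R \ V, e.1 = ρ.2.1 := by
    intro e heS
    obtain ⟨heMG, henot⟩ := Finset.mem_filter.1 heS
    by_cases hBf : ∀ ρ ∈ R, e.2 ≠ ρ.2.2
    · by_cases hAf : ∀ ρ ∈ R, e.1 ≠ ρ.2.1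
      · exact (win0 M R hR hnb hGu heMG hAf hBf).elim
      · push_neg at hAf
        obtain ⟨ρ₁, hρ₁R, he1⟩ := hAf
        refine ⟨ρ₁, Finset.mem_sdiff.2 ⟨hρ₁R, ?_⟩, he1⟩
        intro hρ₁V
        rw [hV, Reach, Finset.mem_filter] at hρ₁V
        obtain ⟨_, F, g, L, hch⟩ := hρ₁V
        exact win1 M R hR hnb hch hGu hGW heMG he1 hBf
    · push_neg at hBf
      obtain ⟨ρ₀, hρ₀R, he2⟩ := hBf
      have hρ₀V' : ρ₀ ∉ V' := fun h => henot ⟨ρ₀, h, he2⟩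
      by_cases hAf : ∀ ρ ∈ R, e.1 ≠ ρ.2.1
      · exfalso
        apply hρ₀V'
        rw [hV', Reach, Finset.mem_filter]
        refine ⟨hρ₀R, G, e, [], ?_⟩
        exact ⟨hρ₀R, Finset.mem_insert_self _ _, hGu, heMG, he2, by simp, by simp, hAf, trivial⟩
      · push_neg at hAf
        obtain ⟨ρ₁, hρ₁R, he1⟩ := hAf
        refine ⟨ρ₁, Finset.mem_sdiff.2 ⟨hρ₁R, ?_⟩, he1⟩
        intro hρ₁V
        rw [hV, Reach, Finset.mem_filter] at hρ₁V
        obtain ⟨_, F, g, L, hch⟩ := hρ₁V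
        by_cases hpos : ρ₀ ∈ (((⟨ρ₁, F, g⟩ : Elt A B N) :: L).map Prod.fst)
        · obtain ⟨x, hx, hx1⟩ := List.mem_map.1 hpos
          have hxr := mem_reach_of_chain M R hch x hx
          rw [hx1] at hxr
          exact hρ₀V' (reach_mono M R (Finset.subset_insert _ _) hxr)
        · apply hρ₀V'
          rw [hV', Reach, Finset.mem_filter]
          refine ⟨hρ₀R, G, e, (⟨ρ₁, F, g⟩ : Elt A B N) :: L, ?_⟩
          refine ⟨hρ₀R, Finset.mem_insert_self _ _, hGu, heMG, he2, hpos, ?_,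
            he1, ch_mono M R (Finset.subset_insert _ _) hch⟩
          intro hlab
          obtain ⟨y, hy, hy1⟩ := List.mem_map.1 hlab
          have := (ch_elem M R hch y hy).2.1
          rw [hy1] at this
          exact hGW this
  have h2' : S₂.card ≤ (R \ V).card := by
    have himg : S₂.image (fun e => e.1) ⊆ (R \ V).image (fun ρ => ρ.2.1) := by
      intro a ha
      obtain ⟨e, heS, rfl⟩ := Finset.mem_image.1 ha
      obtain ⟨ρ, hρ, heq⟩ := h2 e heS
      exact Finset.mem_image.2 ⟨ρ, hρ, heq.symm⟩
    have hcardimg : (S₂.image (fun e => e.1)).card = S₂.card := by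
      apply Finset.card_image_of_injOn
      intro e he f hf hef
      by_contra hne
      exact (hmG e (Finset.mem_filter.1 he).1 f (Finset.mem_filter.1 hf).1 hne).1 hef
    calc S₂.card = (S₂.image (fun e => e.1)).card := hcardimg.symm
      _ ≤ ((R \ V).image fun ρ => ρ.2.1).card := Finset.card_le_card himg
      _ ≤ (R \ V).card := Finset.card_image_le
  have hVR : V ⊆ R := reach_subset M R
  have hsd : (R \ V).card = R.card - V.card := Finset.card_sdiff_of_subset hVR
  have hVle : V.card ≤ R.card := Finset.card_le_card hVR
  omega

lemma rainbow_subset {S T : Finset (Fin N × A × B)} (hT : T ⊆ S) (h : Rainbow M S) :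
    Rainbow M T :=
  ⟨fun p hp => h.1 p (hT hp), fun p hp q hq => h.2 p (hT hp) q (hT hq)⟩

lemma reach_lb (hR : Rainbow M R)
    (hnb : ∀ S : Finset (Fin N × A × B), Rainbow M S → S.card ≤ R.card)
    (hm : ∀ i, IsMatching (M i)) {n : ℕ} (hc : ∀ i, (M i).card = n) :
    ∀ U : Finset (Fin N), (∀ i ∈ U, ∀ ρ ∈ R, i ≠ ρ.1) →
      n * U.card ≤ R.card * U.card + (Reach M R U).card := by
  intro U
  induction U using Finset.induction_on with
  | empty => simp
  | @insert G U hGU ih =>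
      intro hun
      have hunU : ∀ i ∈ U, ∀ ρ ∈ R, i ≠ ρ.1 := fun i hi => hun i (Finset.mem_insert_of_mem hi)
      have hGu : ∀ ρ ∈ R, G ≠ ρ.1 := hun G (Finset.mem_insert_self _ _)
      have hstep := step M R hR hnb (hm G) hGu hGU
      have hih := ih hunU
      have hmono : (Reach M R U).card ≤ (Reach M R (insert G U)).card :=
        Finset.card_le_card (reach_mono M R (Finset.subset_insert _ _))
      rw [Finset.card_insert_of_notMem hGU]
      have hcG := hc G
      have e1 : n * (U.card + 1) = n * U.card + n := by ring
      have e2 : R.card * (U.card + 1) = R.card * U.card + R.card := by ring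
      omega

end RB

/-- If a bipartite multigraph is the union of `⌊(k+2)/(k+1)·n⌋ - (k+1)` matchings of
size `n`, then it has a rainbow matching of size `n - k`. -/
theorem rainbow_matching_of_many_matchings {A B : Type*} (n k : ℕ) (hk : k < n)
    (M : Fin ((k + 2) * n / (k + 1) - (k + 1)) → Finset (A × B))
    (hcard : ∀ i, (M i).card = n) (hmatch : ∀ i, IsMatching (M i)) :
    HasRainbowMatching M (n - k) := by
  classical
  revert M
  generalize hNNdef : (k + 2) * n / (k + 1) - (k + 1) = NN
  intro M hcard hmatch
  set P : ℕ → Prop := fun s => ∃ S : Finset (Fin NN × A × B), RB.Rainbow M S ∧ S.card = s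
    with hPdef
  have hP0 : P 0 := ⟨∅, ⟨fun p hp => absurd hp (Finset.notMem_empty p),
    fun p hp => absurd hp (Finset.notMem_empty p)⟩, rfl⟩
  have hbound : ∀ s, P s → s ≤ NN := by
    rintro s ⟨S, hS, rfl⟩
    have hinj : (S.image Prod.fst).card = S.card := by
      apply Finset.card_image_of_injOn
      intro p hp q hq hpq
      by_contra hne
      exact (hS.2 p hp q hq hne).1 hpq
    calc S.card = (S.image Prod.fst).card := hinj.symm
      _ ≤ (Finset.univ : Finset (Fin NN)).card := Finset.card_le_univ _
      _ = NN := by simp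
  set r := Nat.findGreatest P NN with hrdef
  have hPr : P r := Nat.findGreatest_spec (Nat.zero_le _) hP0
  have hnb : ∀ S : Finset (Fin NN × A × B), RB.Rainbow M S → S.card ≤ r := by
    intro S hS
    by_contra hgt
    push_neg at hgt
    exact Nat.findGreatest_is_greatest hgt (hbound _ ⟨S, hS, rfl⟩) ⟨S, hS, rfl⟩
  obtain ⟨SR, hSR, hSRcard⟩ := hPr
  by_cases hbig : n - k ≤ r
  · -- extract a rainbow matching of size n - k
    obtain ⟨S', hsub, hS'card⟩ := Finset.exists_subset_card_eq (s := SR) (n := n - k) (by omega)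
    have hS' : RB.Rainbow M S' := RB.rainbow_subset M hsub hSR
    set f : Fin (n - k) → S' :=
      fun i => S'.equivFin.symm (finCongr hS'card.symm i) with hfdef
    have hfinj : Function.Injective f :=
      Function.Injective.comp S'.equivFin.symm.injective (finCongr hS'card.symm).injective
    refine ⟨fun i => (f i).1.1, fun i => (f i).1.2, ?_, ?_, ?_⟩
    · intro i j hij
      by_contra hne
      have hfne : ((f i : Fin NN × A × B)) ≠ (f j) := by
        intro hEq
        exact hne (hfinj (Subtype.ext hEq))
      exact (hS'.2 _ (f i).2 _ (f j).2 hfne).1 hij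
    · intro i
      exact hS'.1 _ (f i).2
    · intro i j hij
      have hfne : ((f i : Fin NN × A × B)) ≠ (f j) := by
        intro hEq
        exact hij (hfinj (Subtype.ext hEq))
      have h := hS'.2 _ (f i).2 _ (f j).2 hfne
      exact ⟨h.2.1, h.2.2⟩
  · exfalso
    push_neg at hbig
    set U := Finset.univ.filter (fun i : Fin NN => ∀ ρ ∈ SR, i ≠ ρ.1) with hUdef
    have hUcard : NN ≤ U.card + r := by
      have hcover : (Finset.univ : Finset (Fin NN)) ⊆ U ∪ SR.image Prod.fst := by
        intro i _
        by_cases h : ∀ ρ ∈ SR, i ≠ ρ.1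
        · exact Finset.mem_union_left _ (Finset.mem_filter.2 ⟨Finset.mem_univ _, h⟩)
        · push_neg at h
          obtain ⟨ρ, hρ, hEq⟩ := h
          exact Finset.mem_union_right _ (Finset.mem_image.2 ⟨ρ, hρ, hEq.symm⟩)
      have himgle : (SR.image Prod.fst).card ≤ r := by
        calc (SR.image Prod.fst).card ≤ SR.card := Finset.card_image_le
          _ = r := hSRcard
      calc NN = (Finset.univ : Finset (Fin NN)).card := by simp
        _ ≤ (U ∪ SR.image Prod.fst).card := Finset.card_le_card hcover
        _ ≤ U.card + (SR.image Prod.fst).card := Finset.card_union_le _ _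
        _ ≤ U.card + r := by omega
    have hnb' : ∀ S : Finset (Fin NN × A × B), RB.Rainbow M S → S.card ≤ SR.card := by
      intro S hS
      rw [hSRcard]
      exact hnb S hS
    have hlb := RB.reach_lb M SR hSR hnb' hmatch hcard U
      (fun i hi => (Finset.mem_filter.1 hi).2)
    have hreach : (RB.Reach M SR U).card ≤ r := by
      calc (RB.Reach M SR U).card ≤ SR.card := Finset.card_le_card (RB.reach_subset M SR)
        _ = r := hSRcard
    rw [hSRcard] at hlb
    have hlb' : n * U.card ≤ r * U.card + r := by omega
    have hq := Nat.div_add_mod n (k + 1)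
    have hmod : n % (k + 1) < k + 1 := Nat.mod_lt _ (by omega)
    obtain ⟨q, hqdef⟩ : ∃ q, q = n / (k + 1) := ⟨_, rfl⟩
    rw [← hqdef] at hq
    have hNNq : NN + (k + 1) = n + q := by
      have h1 : (k + 2) * n = (k + 1) * n + n := by ring
      have h2 : (k + 2) * n / (k + 1) = n + q := by
        rw [h1, Nat.mul_add_div (by omega), hqdef]
      rw [h2] at hNNdef
      omega
    have hUq : q ≤ U.card := by omega
    have hrk : r + (k + 1) ≤ n := by omega
    have hmul1 : (r + (k + 1)) * U.card ≤ n * U.card := Nat.mul_le_mul_right _ hrk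
    have hmul2 : (r + (k + 1)) * U.card = r * U.card + (k + 1) * U.card := by ring
    have hmul3 : (k + 1) * q ≤ (k + 1) * U.card := Nat.mul_le_mul_left _ hUq
    omega
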